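/- If F(x) = Σ_{i=0}^∞ s_i W_i(x) is built from triangle functions with peaks a_i ∈ [c,1-c] and coefficients satisfying s_{i+1} = s_i(1-a_{i+1})a_{i+2}, and F has a continuous second derivative at the peak points, then a_i = 1/2 for all relevant i; consequently the only twice continuously differentiable function representable in the family x ↦ x - Σ s_i W_i(x) (with s_0 = a_0 a_1) is x². -/

import Mathlib

noncomputable def T (a : ℝ) (x : ℝ) : ℝ :=
  if x ≤ a then x / a else 1 - (x - a) / (1 - a)

noncomputable def W (a : ℕ → ℝ) : ℕ → ℝ → ℝ
  | 0 => T (a 0)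
  | n + 1 => fun x => T (a (n + 1)) (W a n x)

open Set Filter Topology

lemma T_mem {α x : ℝ} (h0 : 0 < α) (h1 : α < 1) (hx : x ∈ Icc (0:ℝ) 1) :
    T α x ∈ Icc (0:ℝ) 1 := by
  obtain ⟨hx0, hx1⟩ := hx
  unfold T
  split_ifs with h
  · exact ⟨by positivity, by rw [div_le_one h0]; exact h⟩
  · push_neg at h
    have h2 : (x - α)/(1-α) ≤ 1 := by rw [div_le_one (by linarith)]; linarith
    have h3 : 0 ≤ (x - α)/(1-α) := div_nonneg (by linarith) (by linarith)
    exact ⟨by linarith, by linarith⟩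

lemma T_mul {α y : ℝ} (h0 : 0 < α) (hy : y ∈ Icc (0:ℝ) 1) : T α (α * y) = y := by
  have h : α * y ≤ α := by nlinarith [hy.2]
  rw [T, if_pos h, mul_comm, mul_div_assoc, div_self h0.ne', mul_one]

lemma T_refl {α y : ℝ} (h0 : 0 < α) (h1 : α < 1) (hy : y ∈ Icc (0:ℝ) 1) :
    T α (1 - (1-α) * y) = y := by
  obtain ⟨hy0, hy1⟩ := hy
  rw [T]
  split_ifs with h
  · have h2 : (1-α) * y ≤ 1 - α := by nlinarith
    have h3 : y = 1 := by nlinarith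
    subst h3
    have e : 1 - (1-α) * 1 = α := by ring
    rw [e, div_self h0.ne']
  · have hne : (1:ℝ) - α ≠ 0 := by linarith
    field_simp
    ring

lemma T_zero {α : ℝ} (h0 : 0 ≤ α) : T α 0 = 0 := by
  rw [T, if_pos h0, zero_div]

lemma T_one {α : ℝ} (h1 : α < 1) : T α 1 = 0 := by
  rw [T, if_neg (by linarith), div_self (by linarith : (1:ℝ) - α ≠ 0)]; ring

lemma W_succ (b : ℕ → ℝ) (i : ℕ) (x : ℝ) :
    W b (i+1) x = W (fun j => b (j+1)) i (T (b 0) x) := by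
  induction i with
  | zero => rfl
  | succ n ih =>
    show T (b (n+2)) (W b (n+1) x) = T (b (n+2)) (W (fun j => b (j+1)) n (T (b 0) x))
    rw [ih]

lemma W_mem {b : ℕ → ℝ} (hb : ∀ j, 0 < b j ∧ b j < 1) (i : ℕ) {x : ℝ}
    (hx : x ∈ Icc (0:ℝ) 1) : W b i x ∈ Icc (0:ℝ) 1 := by
  induction i with
  | zero => exact T_mem (hb 0).1 (hb 0).2 hx
  | succ n ih => exact T_mem (hb (n+1)).1 (hb (n+1)).2 ih

lemma W_zero {b : ℕ → ℝ} (hb : ∀ j, 0 < b j ∧ b j < 1) (i : ℕ) : W b i 0 = 0 := by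
  induction i with
  | zero => exact T_zero (hb 0).1.le
  | succ n ih => show T (b (n+1)) (W b n 0) = 0; rw [ih]; exact T_zero (hb (n+1)).1.le

lemma W_one {b : ℕ → ℝ} (hb : ∀ j, 0 < b j ∧ b j < 1) (i : ℕ) : W b i 1 = 0 := by
  induction i with
  | zero => exact T_one (hb 0).2
  | succ n ih => show T (b (n+1)) (W b n 1) = 0; rw [ih]; exact T_zero (hb (n+1)).1.le

noncomputable def Hn (a s : ℕ → ℝ) (n : ℕ) (x : ℝ) : ℝ :=
  ∑' i, s (n + i) * W (fun j => a (n + j)) i x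

section Main

variable {a s : ℕ → ℝ} {c : ℝ}

lemma ha' (hc : c ∈ Ioo (0:ℝ) (1/2)) (ha : ∀ i, a i ∈ Icc c (1-c)) :
    ∀ j, 0 < a j ∧ a j < 1 := by
  intro j
  obtain ⟨h1, h2⟩ := ha j
  obtain ⟨hc0, hc1⟩ := hc
  constructor <;> linarith

lemma s_pos (hc : c ∈ Ioo (0:ℝ) (1/2)) (ha : ∀ i, a i ∈ Icc c (1-c))
    (hs0 : s 0 = a 0 * a 1) (hrec : ∀ i, s (i+1) = s i * (1 - a (i+1)) * a (i+2)) :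
    ∀ n, 0 < s n := by
  intro n
  induction n with
  | zero => rw [hs0]; exact mul_pos (ha' hc ha 0).1 (ha' hc ha 1).1
  | succ m ih =>
    rw [hrec m]
    have h1 := (ha' hc ha (m+1)).2
    have h2 := (ha' hc ha (m+2)).1
    have : (0:ℝ) < 1 - a (m+1) := by linarith
    positivity

lemma s_le (hc : c ∈ Ioo (0:ℝ) (1/2)) (ha : ∀ i, a i ∈ Icc c (1-c))
    (hs0 : s 0 = a 0 * a 1) (hrec : ∀ i, s (i+1) = s i * (1 - a (i+1)) * a (i+2)) :
    ∀ n i, s (n + i) ≤ s n * ((1-c)^2)^i := by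
  intro n i
  induction i with
  | zero => simp
  | succ m ih =>
    have h1 : s (n + (m+1)) = s (n+m) * (1 - a (n+m+1)) * a (n+m+2) := hrec (n+m)
    have hsp := s_pos hc ha hs0 hrec (n+m)
    have ha1 := ha (n+m+1); have ha2 := ha (n+m+2)
    have hc0 := hc.1; have hc1 := hc.2
    have hb1 : 1 - a (n+m+1) ≤ 1 - c := by linarith [ha1.1]
    have hb1' : 0 ≤ 1 - a (n+m+1) := by linarith [ha1.2]
    have hb2 : a (n+m+2) ≤ 1 - c := ha2.2
    have hb2' : 0 ≤ a (n+m+2) := by linarith [ha2.1]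
    have key : s (n + (m+1)) ≤ s (n+m) * ((1-c)^2) := by
      have hm : (1 - a (n+m+1)) * a (n+m+2) ≤ (1-c)*(1-c) :=
        mul_le_mul hb1 hb2 hb2' (by linarith)
      have : (1-c)*(1-c) = (1-c)^2 := by ring
      rw [h1, mul_assoc]
      calc s (n+m) * ((1 - a (n+m+1)) * a (n+m+2)) ≤ s (n+m) * ((1-c)*(1-c)) :=
            mul_le_mul_of_nonneg_left hm hsp.le
        _ = s (n+m) * ((1-c)^2) := by ring
    calc s (n + (m+1)) ≤ s (n+m) * ((1-c)^2) := key
      _ ≤ s n * ((1-c)^2)^m * ((1-c)^2) := by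
          apply mul_le_mul_of_nonneg_right ih; positivity
      _ = s n * ((1-c)^2)^(m+1) := by ring

lemma summable_Hn (hc : c ∈ Ioo (0:ℝ) (1/2)) (ha : ∀ i, a i ∈ Icc c (1-c))
    (hs0 : s 0 = a 0 * a 1) (hrec : ∀ i, s (i+1) = s i * (1 - a (i+1)) * a (i+2))
    (n : ℕ) {x : ℝ} (hx : x ∈ Icc (0:ℝ) 1) :
    Summable (fun i => s (n + i) * W (fun j => a (n + j)) i x) := by
  have hb : ∀ j, 0 < a (n + j) ∧ a (n + j) < 1 := fun j => ha' hc ha (n + j)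
  apply Summable.of_nonneg_of_le
    (fun i => mul_nonneg (s_pos hc ha hs0 hrec (n+i)).le (W_mem hb i hx).1)
    (fun i => ?_)
    ((summable_geometric_of_lt_one (by positivity) (by nlinarith [hc.1, hc.2] :
        (1-c)^2 < 1)).mul_left (s n))
  calc s (n + i) * W (fun j => a (n + j)) i x ≤ s (n+i) * 1 := by
        apply mul_le_mul_of_nonneg_left (W_mem hb i hx).2 (s_pos hc ha hs0 hrec (n+i)).le
    _ = s (n+i) := mul_one _
    _ ≤ s n * ((1-c)^2)^i := s_le hc ha hs0 hrec n i

lemma W_shift (n i : ℕ) (x : ℝ) :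
    W (fun j => a (n + j)) (i+1) x = W (fun j => a ((n+1) + j)) i (T (a n) x) := by
  rw [W_succ]
  have e2 : (fun j => a (n + (j+1))) = (fun j => a ((n+1) + j)) := funext fun j => by congr 1; omega
  have e0 : a (n + 0) = a n := by rw [Nat.add_zero]
  rw [e0, e2]

lemma Hn_one (hc : c ∈ Ioo (0:ℝ) (1/2)) (ha : ∀ i, a i ∈ Icc c (1-c)) (n : ℕ) :
    Hn a s n 1 = 0 := by
  have hb : ∀ j, 0 < a (n + j) ∧ a (n + j) < 1 := fun j => ha' hc ha (n + j)
  rw [Hn]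
  have : ∀ i : ℕ, s (n + i) * W (fun j => a (n + j)) i 1 = 0 := by
    intro i; rw [W_one hb, mul_zero]
  rw [tsum_congr this, tsum_zero]

lemma Hn_zero (hc : c ∈ Ioo (0:ℝ) (1/2)) (ha : ∀ i, a i ∈ Icc c (1-c)) (n : ℕ) :
    Hn a s n 0 = 0 := by
  have hb : ∀ j, 0 < a (n + j) ∧ a (n + j) < 1 := fun j => ha' hc ha (n + j)
  rw [Hn]
  have : ∀ i : ℕ, s (n + i) * W (fun j => a (n + j)) i 0 = 0 := by
    intro i; rw [W_zero hb, mul_zero]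
  rw [tsum_congr this, tsum_zero]

lemma Hn_left (hc : c ∈ Ioo (0:ℝ) (1/2)) (ha : ∀ i, a i ∈ Icc c (1-c))
    (hs0 : s 0 = a 0 * a 1) (hrec : ∀ i, s (i+1) = s i * (1 - a (i+1)) * a (i+2))
    (n : ℕ) {y : ℝ} (hy : y ∈ Icc (0:ℝ) 1) :
    Hn a s n (a n * y) = s n * y + Hn a s (n+1) y := by
  have han := ha' hc ha n
  have hxy : a n * y ∈ Icc (0:ℝ) 1 := by
    constructor
    · exact mul_nonneg han.1.le hy.1
    · nlinarith [hy.2, han.2, han.1, hy.1]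
  have hsum := summable_Hn hc ha hs0 hrec n hxy
  rw [Hn, Summable.tsum_eq_zero_add hsum]
  have e3 : T (a n) (a n * y) = y := T_mul han.1 hy
  congr 1
  · show s (n + 0) * T (a (n+0)) (a n * y) = s n * y
    rw [Nat.add_zero, e3]
  · rw [Hn]
    apply tsum_congr
    intro i
    rw [W_shift, e3, show n + (i+1) = (n+1) + i from by omega]

lemma Hn_right (hc : c ∈ Ioo (0:ℝ) (1/2)) (ha : ∀ i, a i ∈ Icc c (1-c))
    (hs0 : s 0 = a 0 * a 1) (hrec : ∀ i, s (i+1) = s i * (1 - a (i+1)) * a (i+2))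
    (n : ℕ) {y : ℝ} (hy : y ∈ Icc (0:ℝ) 1) :
    Hn a s n (1 - (1 - a n) * y) = s n * y + Hn a s (n+1) y := by
  have han := ha' hc ha n
  have hxy : 1 - (1 - a n) * y ∈ Icc (0:ℝ) 1 := by
    constructor
    · nlinarith [hy.2, han.2, han.1, hy.1]
    · nlinarith [hy.1, han.2, han.1]
  have hsum := summable_Hn hc ha hs0 hrec n hxy
  rw [Hn, Summable.tsum_eq_zero_add hsum]
  have e3 : T (a n) (1 - (1 - a n) * y) = y := T_refl han.1 han.2 hy
  congr 1
  · show s (n + 0) * T (a (n+0)) (1 - (1 - a n) * y) = s n * y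
    rw [Nat.add_zero, e3]
  · rw [Hn]
    apply tsum_congr
    intro i
    rw [W_shift, e3, show n + (i+1) = (n+1) + i from by omega]

lemma Hn_peak (hc : c ∈ Ioo (0:ℝ) (1/2)) (ha : ∀ i, a i ∈ Icc c (1-c))
    (hs0 : s 0 = a 0 * a 1) (hrec : ∀ i, s (i+1) = s i * (1 - a (i+1)) * a (i+2))
    (n : ℕ) : Hn a s n (a n) = s n := by
  have := Hn_left hc ha hs0 hrec n (by constructor <;> norm_num : (1:ℝ) ∈ Icc (0:ℝ) 1)
  rw [mul_one] at this
  rw [this, Hn_one hc ha, mul_one, add_zero]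

lemma Hn_smooth (hc : c ∈ Ioo (0:ℝ) (1/2)) (ha : ∀ i, a i ∈ Icc c (1-c))
    (hs0 : s 0 = a 0 * a 1) (hrec : ∀ i, s (i+1) = s i * (1 - a (i+1)) * a (i+2))
    (hsmooth : ContDiffOn ℝ 2 (fun x => x - ∑' i : ℕ, s i * W a i x) (Icc (0:ℝ) 1)) :
    ∀ n, ContDiffOn ℝ 2 (Hn a s n) (Icc (0:ℝ) 1) := by
  intro n
  induction n with
  | zero =>
    have e : ∀ x : ℝ, Hn a s 0 x = ∑' i, s i * W a i x := by
      intro x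
      rw [Hn]
      apply tsum_congr
      intro i
      rw [Nat.zero_add]
      congr 1
      have : (fun j => a (0 + j)) = a := funext fun j => by rw [Nat.zero_add]
      rw [this]
    have h2 : ContDiffOn ℝ 2 (fun x : ℝ => x - (x - ∑' i, s i * W a i x)) (Icc (0:ℝ) 1) :=
      contDiffOn_id.sub hsmooth
    exact h2.congr (fun x _ => by rw [e x]; ring)
  | succ n ih =>
    have hmap : MapsTo (fun y : ℝ => a n * y) (Icc (0:ℝ) 1) (Icc (0:ℝ) 1) := by
      intro y hy
      have han := ha' hc ha n
      refine ⟨mul_nonneg han.1.le hy.1, ?_⟩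
      show a n * y ≤ 1
      nlinarith [hy.2, han.2, han.1, hy.1]
    have hcomp : ContDiffOn ℝ 2 ((Hn a s n) ∘ (fun y : ℝ => a n * y)) (Icc (0:ℝ) 1) :=
      ih.comp ((contDiff_const.mul contDiff_id).contDiffOn) hmap
    have hg : ContDiffOn ℝ 2 (fun y : ℝ => Hn a s n (a n * y) - s n * y) (Icc (0:ℝ) 1) :=
      hcomp.sub ((contDiff_const.mul contDiff_id).contDiffOn)
    apply hg.congr
    intro y hy
    have := Hn_left hc ha hs0 hrec n hy
    rw [this]; ring

end Main

lemma eqOn_Icc_of_Ioo {f g : ℝ → ℝ} (hf : ContinuousOn f (Icc (0:ℝ) 1))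
    (hg : ContinuousOn g (Icc (0:ℝ) 1))
    (h : ∀ y ∈ Ioo (0:ℝ) 1, f y = g y) : ∀ y ∈ Icc (0:ℝ) 1, f y = g y := by
  intro y hy
  set z : ℕ → ℝ := fun n => y + (1/2 - y) * (1/(n+1)) with hz
  have hzmem : ∀ n : ℕ, z n ∈ Ioo (0:ℝ) 1 := by
    intro n
    have h1 : (0:ℝ) < 1/((n:ℝ)+1) := by positivity
    have h2 : (1:ℝ)/((n:ℝ)+1) ≤ 1 := by
      rw [div_le_one (by positivity)]
      simp [le_add_iff_nonneg_left]
    constructor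
    · have : z n = (1 - 1/((n:ℝ)+1)) * y + (1/((n:ℝ)+1)) * (1/2) := by rw [hz]; ring
      rw [this]
      have := hy.1; have := hy.2
      nlinarith
    · have : z n = (1 - 1/((n:ℝ)+1)) * y + (1/((n:ℝ)+1)) * (1/2) := by rw [hz]; ring
      rw [this]
      have := hy.1; have := hy.2
      nlinarith
  have hzt : Tendsto z atTop (𝓝 y) := by
    have h0 : Tendsto (fun n : ℕ => 1/((n:ℝ)+1)) atTop (𝓝 0) :=
      tendsto_one_div_add_atTop_nhds_zero_nat
    have h3 : Tendsto (fun n : ℕ => y + (1/2 - y) * (1/((n:ℝ)+1))) atTop (𝓝 (y + (1/2 - y) * 0)) :=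
      tendsto_const_nhds.add (tendsto_const_nhds.mul h0)
    have h4 : y + (1/2 - y) * 0 = y := by ring
    rw [h4] at h3
    exact h3
  have hzt' : Tendsto z atTop (𝓝[Icc (0:ℝ) 1] y) := by
    apply tendsto_nhdsWithin_of_tendsto_nhds_of_eventually_within _ hzt
    filter_upwards with n
    exact Ioo_subset_Icc_self (hzmem n)
  have A : Tendsto (fun n => f (z n)) atTop (𝓝 (f y)) := (hf y hy).tendsto.comp hzt'
  have B : Tendsto (fun n => g (z n)) atTop (𝓝 (g y)) := (hg y hy).tendsto.comp hzt'
  have A' : Tendsto (fun n => g (z n)) atTop (𝓝 (f y)) := by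
    apply A.congr
    intro n
    exact h (z n) (hzmem n)
  exact tendsto_nhds_unique A' B

lemma itd_interior {f : ℝ → ℝ} (hf : ContDiffOn ℝ 2 f (Icc (0:ℝ) 1)) {x : ℝ}
    (hx : x ∈ Ioo (0:ℝ) 1) :
    iteratedDerivWithin 2 f (Icc (0:ℝ) 1) x = deriv (deriv f) x := by
  have hu : UniqueDiffOn ℝ (Icc (0:ℝ) 1) := uniqueDiffOn_Icc one_pos
  have hxI : x ∈ Icc (0:ℝ) 1 := Ioo_subset_Icc_self hx
  have hnx : Icc (0:ℝ) 1 ∈ 𝓝 x := Icc_mem_nhds hx.1 hx.2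
  rw [iteratedDerivWithin_succ, derivWithin_of_mem_nhds hnx]
  apply Filter.EventuallyEq.deriv_eq
  filter_upwards [Ioo_mem_nhds hx.1 hx.2] with z hz
  rw [iteratedDerivWithin_one,
    derivWithin_of_mem_nhds (Icc_mem_nhds hz.1 hz.2)]

lemma key_transfer {f g : ℝ → ℝ} (hf : ContDiffOn ℝ 2 f (Icc (0:ℝ) 1))
    (hg : ContDiffOn ℝ 2 g (Icc (0:ℝ) 1)) {α β p : ℝ}
    (hmapo : ∀ y ∈ Ioo (0:ℝ) 1, α * y + β ∈ Ioo (0:ℝ) 1)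
    (hmapc : ∀ y ∈ Icc (0:ℝ) 1, α * y + β ∈ Icc (0:ℝ) 1)
    (hEq : ∀ y ∈ Icc (0:ℝ) 1, g y = f (α * y + β) + p * y) :
    ∀ y ∈ Icc (0:ℝ) 1, iteratedDerivWithin 2 g (Icc (0:ℝ) 1) y
      = α^2 * iteratedDerivWithin 2 f (Icc (0:ℝ) 1) (α * y + β) := by
  have hu : UniqueDiffOn ℝ (Icc (0:ℝ) 1) := uniqueDiffOn_Icc one_pos
  have hfIoo : ContDiffOn ℝ 2 f (Ioo (0:ℝ) 1) := hf.mono Ioo_subset_Icc_self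
  have hdf0 : DifferentiableOn ℝ f (Ioo (0:ℝ) 1) :=
    hfIoo.differentiableOn (by norm_num)
  have hC1 : ContDiffOn ℝ 1 (deriv f) (Ioo (0:ℝ) 1) :=
    hfIoo.deriv_of_isOpen isOpen_Ioo (by norm_num)
  have hdf : DifferentiableOn ℝ (deriv f) (Ioo (0:ℝ) 1) :=
    hC1.differentiableOn (by norm_num)
  have d1 : ∀ z ∈ Ioo (0:ℝ) 1, deriv g z = α * deriv f (α * z + β) + p := by
    intro z hz
    have hx' := hmapo z hz
    have hfz : DifferentiableAt ℝ f (α * z + β) :=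
      hdf0.differentiableAt (isOpen_Ioo.mem_nhds hx')
    have hinner : HasDerivAt (fun y : ℝ => α * y + β) α z := by
      simpa using ((hasDerivAt_id z).const_mul α).add_const β
    have hcomp : HasDerivAt (fun y : ℝ => f (α * y + β)) (deriv f (α * z + β) * α) z :=
      hfz.hasDerivAt.comp z hinner
    have hlin : HasDerivAt (fun y : ℝ => p * y) p z := by
      simpa using (hasDerivAt_id z).const_mul p
    have htot : HasDerivAt (fun y : ℝ => f (α * y + β) + p * y)
        (deriv f (α * z + β) * α + p) z := hcomp.add hlin
    have heq : g =ᶠ[𝓝 z] (fun y : ℝ => f (α * y + β) + p * y) := by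
      filter_upwards [Icc_mem_nhds hz.1 hz.2] with w hw
      exact hEq w hw
    rw [heq.deriv_eq, htot.deriv]
    ring
  intro y hy
  -- interior identity
  have main_int : ∀ y ∈ Ioo (0:ℝ) 1, iteratedDerivWithin 2 g (Icc (0:ℝ) 1) y
      = α^2 * iteratedDerivWithin 2 f (Icc (0:ℝ) 1) (α * y + β) := by
    intro w hw
    have hx' := hmapo w hw
    have hdfx : DifferentiableAt ℝ (deriv f) (α * w + β) :=
      hdf.differentiableAt (isOpen_Ioo.mem_nhds hx')
    have hinner : HasDerivAt (fun y : ℝ => α * y + β) α w := by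
      simpa using ((hasDerivAt_id w).const_mul α).add_const β
    have hcomp : HasDerivAt (fun z : ℝ => deriv f (α * z + β))
        (deriv (deriv f) (α * w + β) * α) w := by have := hdfx.hasDerivAt.comp w hinner; exact this
    have htot : HasDerivAt (fun z : ℝ => α * deriv f (α * z + β) + p)
        (α * (deriv (deriv f) (α * w + β) * α)) w := (hcomp.const_mul α).add_const p
    have heq : deriv g =ᶠ[𝓝 w] (fun z : ℝ => α * deriv f (α * z + β) + p) := by
      filter_upwards [Ioo_mem_nhds hw.1 hw.2] with u hu'
      exact d1 u hu'
    rw [itd_interior hg hw, itd_interior hf hx', heq.deriv_eq, htot.deriv]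
    ring
  -- extend to the closed interval by continuity
  have hGg : ContinuousOn (iteratedDerivWithin 2 g (Icc (0:ℝ) 1)) (Icc (0:ℝ) 1) :=
    hg.continuousOn_iteratedDerivWithin (le_refl _) hu
  have hGf : ContinuousOn (iteratedDerivWithin 2 f (Icc (0:ℝ) 1)) (Icc (0:ℝ) 1) :=
    hf.continuousOn_iteratedDerivWithin (le_refl _) hu
  have hcontR : ContinuousOn (fun y : ℝ => α^2 * iteratedDerivWithin 2 f (Icc (0:ℝ) 1) (α * y + β))
      (Icc (0:ℝ) 1) := by
    apply ContinuousOn.mul continuousOn_const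
    apply hGf.comp _ hmapc
    exact ((continuous_const.mul continuous_id).add continuous_const).continuousOn
  exact eqOn_Icc_of_Ioo hGg hcontR main_int y hy

noncomputable def Gn (a s : ℕ → ℝ) (n : ℕ) : ℝ → ℝ :=
  iteratedDerivWithin 2 (Hn a s n) (Icc (0:ℝ) 1)

section Main2

variable {a s : ℕ → ℝ} {c : ℝ}

lemma IDL (hc : c ∈ Ioo (0:ℝ) (1/2)) (ha : ∀ i, a i ∈ Icc c (1-c))
    (hs0 : s 0 = a 0 * a 1) (hrec : ∀ i, s (i+1) = s i * (1 - a (i+1)) * a (i+2))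
    (hsmooth : ContDiffOn ℝ 2 (fun x => x - ∑' i : ℕ, s i * W a i x) (Icc (0:ℝ) 1))
    (n : ℕ) {y : ℝ} (hy : y ∈ Icc (0:ℝ) 1) :
    Gn a s (n+1) y = (a n)^2 * Gn a s n (a n * y) := by
  have han := ha' hc ha n
  have h := key_transfer (Hn_smooth hc ha hs0 hrec hsmooth n)
      (Hn_smooth hc ha hs0 hrec hsmooth (n+1)) (α := a n) (β := 0) (p := -(s n))
      (fun z hz => by
        constructor
        · show 0 < a n * z + 0
          have := hz.1; nlinarith [han.1]
        · show a n * z + 0 < 1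
          nlinarith [hz.2, han.2, hz.1, han.1])
      (fun z hz => by
        constructor
        · show 0 ≤ a n * z + 0
          have := hz.1; nlinarith [han.1]
        · show a n * z + 0 ≤ 1
          nlinarith [hz.2, han.2, hz.1, han.1])
      (fun z hz => by
        have := Hn_left hc ha hs0 hrec n hz
        rw [add_zero]
        rw [this]; ring)
      y hy
  rw [Gn, Gn, h, add_zero]

lemma IDR (hc : c ∈ Ioo (0:ℝ) (1/2)) (ha : ∀ i, a i ∈ Icc c (1-c))
    (hs0 : s 0 = a 0 * a 1) (hrec : ∀ i, s (i+1) = s i * (1 - a (i+1)) * a (i+2))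
    (hsmooth : ContDiffOn ℝ 2 (fun x => x - ∑' i : ℕ, s i * W a i x) (Icc (0:ℝ) 1))
    (n : ℕ) {y : ℝ} (hy : y ∈ Icc (0:ℝ) 1) :
    Gn a s (n+1) y = (1 - a n)^2 * Gn a s n (1 - (1 - a n) * y) := by
  have han := ha' hc ha n
  have h := key_transfer (Hn_smooth hc ha hs0 hrec hsmooth n)
      (Hn_smooth hc ha hs0 hrec hsmooth (n+1)) (α := -(1 - a n)) (β := 1) (p := -(s n))
      (fun z hz => by
        constructor
        · show 0 < -(1 - a n) * z + 1
          nlinarith [hz.2, han.2, hz.1, han.1]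
        · show -(1 - a n) * z + 1 < 1
          nlinarith [hz.2, han.2, hz.1, han.1])
      (fun z hz => by
        constructor
        · show 0 ≤ -(1 - a n) * z + 1
          nlinarith [hz.2, han.2, hz.1, han.1]
        · show -(1 - a n) * z + 1 ≤ 1
          nlinarith [hz.2, han.2, hz.1, han.1])
      (fun z hz => by
        have h2 := Hn_right hc ha hs0 hrec n hz
        have e : -(1 - a n) * z + 1 = 1 - (1 - a n) * z := by ring
        rw [e, h2]; ring)
      y hy
  have e : -(1 - a n) * y + 1 = 1 - (1 - a n) * y := by ring
  have e2 : (-(1 - a n))^2 = (1 - a n)^2 := by ring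
  rw [Gn, Gn, h, e, e2]

end Main2

section Main3
variable {a s : ℕ → ℝ} {c : ℝ}

lemma bad_case (hc : c ∈ Ioo (0:ℝ) (1/2)) (ha : ∀ i, a i ∈ Icc c (1-c))
    (hs0 : s 0 = a 0 * a 1) (hrec : ∀ i, s (i+1) = s i * (1 - a (i+1)) * a (i+2))
    (hsmooth : ContDiffOn ℝ 2 (fun x => x - ∑' i : ℕ, s i * W a i x) (Icc (0:ℝ) 1))
    (k : ℕ) (hk : a k ≠ 1/2) : False := by
  have h01 : (1:ℝ) ∈ Icc (0:ℝ) 1 := ⟨by norm_num, le_refl 1⟩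
  have h00 : (0:ℝ) ∈ Icc (0:ℝ) 1 := ⟨le_refl 0, by norm_num⟩
  have hak := ha' hc ha
  have hu : UniqueDiffOn ℝ (Icc (0:ℝ) 1) := uniqueDiffOn_Icc one_pos
  -- Step 1 : the second derivative vanishes at the right endpoint one level up
  have hX : Gn a s (k+1) 1 = 0 := by
    have h1 := IDL hc ha hs0 hrec hsmooth k h01
    have h2 := IDR hc ha hs0 hrec hsmooth k h01
    rw [mul_one] at h1
    have e : 1 - (1 - a k) * 1 = a k := by ring
    rw [e] at h2
    by_cases hXk : Gn a s k (a k) = 0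
    · rw [h1, hXk, mul_zero]
    · exfalso
      have heq : (a k)^2 * Gn a s k (a k) = (1 - a k)^2 * Gn a s k (a k) := by
        rw [← h1, ← h2]
      have h3 : (a k)^2 = (1 - a k)^2 := mul_right_cancel₀ hXk heq
      apply hk
      have h4 := (hak k).1
      have h5 := (hak k).2
      nlinarith
  -- Step 2 : zero at left endpoints of all deeper levels
  have Z0 : ∀ j, Gn a s (k+2+j) 0 = 0 := by
    intro j
    induction j with
    | zero =>
      show Gn a s (k+1+1) 0 = 0
      have h2 := IDR hc ha hs0 hrec hsmooth (k+1) h00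
      rw [mul_zero, sub_zero] at h2
      rw [h2, hX, mul_zero]
    | succ j ih =>
      show Gn a s ((k+2+j)+1) 0 = 0
      have h2 := IDL hc ha hs0 hrec hsmooth (k+2+j) h00
      rw [mul_zero] at h2
      rw [h2, ih, mul_zero]
  have Z0' : ∀ m, k+2 ≤ m → Gn a s m 0 = 0 := by
    intro m hm
    obtain ⟨j, rfl⟩ : ∃ j, m = k+2+j := ⟨m - (k+2), by omega⟩
    exact Z0 j
  have Z1 : ∀ m, k+2 ≤ m → Gn a s m 1 = 0 := by
    intro m hm
    have h2 := IDR hc ha hs0 hrec hsmooth m h00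
    rw [mul_zero, sub_zero] at h2
    rw [Z0' (m+1) (by omega)] at h2
    have hne : (1 - a m)^2 ≠ 0 :=
      pow_ne_zero 2 (sub_ne_zero.mpr (by have := (hak m).2; intro hcon; linarith [hcon.symm ▸ (hak m).2]))
    exact ((mul_eq_zero.mp h2.symm).resolve_left hne)
  -- Step 3 : density of zeros
  have D : ∀ N : ℕ, ∀ m, k+2 ≤ m → ∀ y ∈ Icc (0:ℝ) 1,
      ∃ z ∈ Icc (0:ℝ) 1, Gn a s m z = 0 ∧ |y - z| ≤ (1-c)^N := by
    intro N
    induction N with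
    | zero =>
      intro m hm y hy
      refine ⟨0, h00, Z0' m hm, ?_⟩
      rw [sub_zero, pow_zero, abs_of_nonneg hy.1]
      exact hy.2
    | succ N ihN =>
      intro m hm y hy
      have ham := hak m
      have hc0 := hc.1
      have hc1 := hc.2
      have hamc := ha m
      rcases le_total y (a m) with hcase | hcase
      · obtain ⟨z', hz'mem, hz'0, hz'd⟩ := ihN (m+1) (by omega) (y / a m)
          ⟨div_nonneg hy.1 ham.1.le, by rw [div_le_one ham.1]; exact hcase⟩
        refine ⟨a m * z', ⟨mul_nonneg ham.1.le hz'mem.1, by nlinarith [hz'mem.2]⟩, ?_, ?_⟩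
        · have h2 := IDL hc ha hs0 hrec hsmooth m hz'mem
          rw [hz'0] at h2
          have hne : (a m)^2 ≠ 0 := pow_ne_zero 2 ham.1.ne'
          exact ((mul_eq_zero.mp h2.symm).resolve_left hne)
        · have hyy : a m * (y / a m) = y := by rw [mul_comm]; exact div_mul_cancel₀ y ham.1.ne'
          have hkey : y - a m * z' = a m * (y / a m - z') := by rw [mul_sub, hyy]
          rw [hkey, abs_mul, abs_of_nonneg ham.1.le]
          calc a m * |y / a m - z'| ≤ (1-c) * (1-c)^N := by
                apply mul_le_mul hamc.2 hz'd (abs_nonneg _) (by linarith)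
            _ = (1-c)^(N+1) := by ring
      · obtain ⟨z', hz'mem, hz'0, hz'd⟩ := ihN (m+1) (by omega) ((1 - y) / (1 - a m))
          ⟨div_nonneg (by linarith [hy.2]) (by linarith), by
            rw [div_le_one (by linarith)]; linarith⟩
        refine ⟨1 - (1 - a m) * z', ⟨by nlinarith [hz'mem.2, hz'mem.1], by nlinarith [hz'mem.1]⟩, ?_, ?_⟩
        · have h2 := IDR hc ha hs0 hrec hsmooth m hz'mem
          rw [hz'0] at h2
          have hne : (1 - a m)^2 ≠ 0 := pow_ne_zero 2 (by intro hcon; linarith [sub_eq_zero.mp hcon])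
          exact ((mul_eq_zero.mp h2.symm).resolve_left hne)
        · have hne' : (1:ℝ) - a m ≠ 0 := by intro hcon; linarith [sub_eq_zero.mp hcon]
          have hyy : (1 - a m) * ((1 - y) / (1 - a m)) = 1 - y := by rw [mul_comm]; exact div_mul_cancel₀ (1-y) hne'
          have hkey : y - (1 - (1 - a m) * z') = (1 - a m) * (z' - (1 - y)/(1 - a m)) := by
            rw [mul_sub, hyy]; ring
          rw [hkey, abs_mul, abs_of_nonneg (by linarith : (0:ℝ) ≤ 1 - a m)]
          rw [abs_sub_comm]
          calc (1 - a m) * |(1 - y)/(1 - a m) - z'| ≤ (1-c) * (1-c)^N := by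
                apply mul_le_mul (by linarith [hamc.1]) hz'd (abs_nonneg _) (by linarith)
            _ = (1-c)^(N+1) := by ring
  -- Step 4 : G vanishes identically at level k+2
  have hGcont : ContinuousOn (Gn a s (k+2)) (Icc (0:ℝ) 1) :=
    (Hn_smooth hc ha hs0 hrec hsmooth (k+2)).continuousOn_iteratedDerivWithin (le_refl _) hu
  have hGzero : ∀ y ∈ Icc (0:ℝ) 1, Gn a s (k+2) y = 0 := by
    intro y hy
    by_contra hne
    have hpos : 0 < |Gn a s (k+2) y| := abs_pos.mpr hne
    have hcw := hGcont y hy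
    rw [Metric.continuousWithinAt_iff] at hcw
    obtain ⟨δ, hδ, hball⟩ := hcw _ hpos
    obtain ⟨N, hN⟩ : ∃ N : ℕ, (1-c)^N < δ :=
      exists_pow_lt_of_lt_one hδ (by linarith [hc.1] : 1 - c < 1)
    obtain ⟨z, hzm, hz0, hzd⟩ := D N (k+2) (le_refl _) y hy
    have hdist : dist z y < δ := by
      rw [Real.dist_eq, abs_sub_comm]
      exact lt_of_le_of_lt hzd hN
    have := hball hzm hdist
    rw [hz0, Real.dist_eq, zero_sub, abs_neg] at this
    exact absurd this (lt_irrefl _)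
  -- Step 5 : Hn (k+2) is affine, hence zero, contradiction
  set F := Hn a s (k+2) with hF
  have hFs : ContDiffOn ℝ 2 F (Icc (0:ℝ) 1) := Hn_smooth hc ha hs0 hrec hsmooth (k+2)
  have hC1' : ContDiffOn ℝ 1 (derivWithin F (Icc (0:ℝ) 1)) (Icc (0:ℝ) 1) :=
    hFs.derivWithin hu (by norm_num)
  have hdF : DifferentiableOn ℝ (derivWithin F (Icc (0:ℝ) 1)) (Icc (0:ℝ) 1) :=
    hC1'.differentiableOn (by norm_num)
  have hder0 : ∀ x ∈ Icc (0:ℝ) 1, derivWithin (derivWithin F (Icc (0:ℝ) 1)) (Icc (0:ℝ) 1) x = 0 := by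
    intro x hx
    have hz := hGzero x hx
    rw [Gn, iteratedDerivWithin_succ] at hz
    have e : Set.EqOn (iteratedDerivWithin 1 F (Icc (0:ℝ) 1)) (derivWithin F (Icc (0:ℝ) 1))
        (Icc (0:ℝ) 1) := fun z hzI => by rw [iteratedDerivWithin_one]
    rw [derivWithin_congr e (e hx)] at hz
    exact hz
  have hconst := constant_of_derivWithin_zero hdF (fun x hx => hder0 x (Ico_subset_Icc_self hx))
  set C := derivWithin F (Icc (0:ℝ) 1) 0 with hC
  have hdF2 : DifferentiableOn ℝ F (Icc (0:ℝ) 1) := hFs.differentiableOn (by norm_num)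
  have hG2 : DifferentiableOn ℝ (fun x => F x - C * x) (Icc (0:ℝ) 1) :=
    hdF2.sub ((differentiable_id.const_mul C).differentiableOn)
  have hder1 : ∀ x ∈ Ico (0:ℝ) 1, derivWithin (fun x => F x - C * x) (Icc (0:ℝ) 1) x = 0 := by
    intro x hx
    have hxI : x ∈ Icc (0:ℝ) 1 := Ico_subset_Icc_self hx
    have h1 : HasDerivWithinAt F (derivWithin F (Icc (0:ℝ) 1) x) (Icc (0:ℝ) 1) x :=
      (hdF2 x hxI).hasDerivWithinAt
    have h2 : HasDerivWithinAt (fun y : ℝ => C * y) (C * 1) (Icc (0:ℝ) 1) x :=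
      ((hasDerivAt_id x).const_mul C).hasDerivWithinAt
    have h3 := (h1.sub h2).derivWithin (hu x hxI)
    rw [show (fun x => F x - C * x) = (F - fun y => C * y) from rfl, h3, hconst x hxI]
    ring
  have hconst2 := constant_of_derivWithin_zero hG2 hder1
  have hF0 : F 0 = 0 := Hn_zero hc ha (k+2)
  have hF1 : F 1 = 0 := Hn_one hc ha (k+2)
  have hCval : C = 0 := by
    have := hconst2 1 h01
    rw [hF1, hF0] at this
    simpa using this
  have hFall : ∀ x ∈ Icc (0:ℝ) 1, F x = 0 := by
    intro x hx
    have := hconst2 x hx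
    rw [hCval, hF0] at this
    simpa using this
  have hpeak : F (a (k+2)) = s (k+2) := Hn_peak hc ha hs0 hrec (k+2)
  have hamem : a (k+2) ∈ Icc (0:ℝ) 1 := by
    have := hak (k+2); exact ⟨this.1.le, this.2.le⟩
  have := hFall (a (k+2)) hamem
  rw [hpeak] at this
  exact absurd this (s_pos hc ha hs0 hrec (k+2)).ne'

end Main3

noncomputable def It : ℕ → ℝ → ℝ
  | 0 => id
  | n+1 => fun x => T (1/2) (It n x)

lemma tent_id (y : ℝ) :
    y - y^2 = (1/4) * T (1/2) y + (1/4) * (T (1/2) y - (T (1/2) y)^2) := by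
  rw [T]
  split_ifs with h
  · have e : y / (1/2 : ℝ) = 2 * y := by norm_num; ring
    rw [e]; ring
  · have e : 1 - (y - 1/2) / (1 - 1/2 : ℝ) = 2 - 2*y := by norm_num; ring
    rw [e]; ring

lemma W_half {a : ℕ → ℝ} (hhalf : ∀ i, a i = 1/2) (n : ℕ) (x : ℝ) :
    W a n x = It (n+1) x := by
  induction n with
  | zero => show T (a 0) x = T (1/2) (It 0 x); rw [hhalf 0]; rfl
  | succ n ih => show T (a (n+1)) (W a n x) = T (1/2) (It (n+1) x); rw [hhalf (n+1), ih]

lemma It_mem {x : ℝ} (hx : x ∈ Icc (0:ℝ) 1) (n : ℕ) : It n x ∈ Icc (0:ℝ) 1 := by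
  induction n with
  | zero => exact hx
  | succ n ih => exact T_mem (by norm_num) (by norm_num) ih

lemma partial_sum (x : ℝ) :
    ∀ n : ℕ, ∑ i ∈ Finset.range n, (1/4:ℝ)^(i+1) * It (i+1) x
      = (x - x^2) - (1/4)^n * (It n x - (It n x)^2) := by
  intro n
  induction n with
  | zero => simp [It]
  | succ n ih =>
    rw [Finset.sum_range_succ, ih]
    have key : It n x - (It n x)^2
        = (1/4) * It (n+1) x + (1/4) * (It (n+1) x - (It (n+1) x)^2) := tent_id (It n x)
    linear_combination (-((1/4:ℝ)^n)) * key

lemma half_sum {a s : ℕ → ℝ} (hhalf : ∀ i, a i = 1/2) (hs : ∀ i, s i = (1/4:ℝ)^(i+1))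
    {x : ℝ} (hx : x ∈ Icc (0:ℝ) 1) : ∑' i, s i * W a i x = x - x^2 := by
  have hbs : ∀ i, s i * W a i x = (1/4:ℝ)^(i+1) * It (i+1) x := fun i => by
    rw [hs i, W_half hhalf i x]
  have hsummable : Summable (fun i => s i * W a i x) := by
    have e : (fun i : ℕ => s i * W a i x) = fun i => (1/4:ℝ) * ((1/4)^i * It (i+1) x) :=
      funext fun i => by rw [hbs i]; ring
    rw [e]
    apply Summable.mul_left
    apply Summable.of_nonneg_of_le (fun i => ?_) (fun i => ?_)
      (summable_geometric_of_lt_one (by norm_num : (0:ℝ) ≤ 1/4) (by norm_num))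
    · have h1 := (It_mem hx (i+1)).1
      positivity
    · exact mul_le_of_le_one_right (pow_nonneg (by norm_num) i) (It_mem hx (i+1)).2
  have ht1 : Tendsto (fun n => ∑ i ∈ Finset.range n, s i * W a i x) atTop
      (𝓝 (∑' i, s i * W a i x)) := hsummable.hasSum.tendsto_sum_nat
  have heqn : ∀ n, ∑ i ∈ Finset.range n, s i * W a i x
      = (x - x^2) - (1/4:ℝ)^n * (It n x - (It n x)^2) := by
    intro n
    rw [Finset.sum_congr rfl (fun i _ => hbs i)]
    exact partial_sum x n
  have hz : Tendsto (fun n : ℕ => (1/4:ℝ)^n * (It n x - (It n x)^2)) atTop (𝓝 0) := by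
    apply squeeze_zero (fun n => ?_) (fun n => ?_)
      (tendsto_pow_atTop_nhds_zero_of_lt_one (by norm_num : (0:ℝ) ≤ 1/4) (by norm_num))
    · have h1 := (It_mem hx n).1
      have h2 := (It_mem hx n).2
      exact mul_nonneg (pow_nonneg (by norm_num) n) (by nlinarith)
    · have h1 := (It_mem hx n).1
      have h2 := (It_mem hx n).2
      have h3 : It n x - (It n x)^2 ≤ 1 := by nlinarith
      have h4 : (0:ℝ) ≤ (1/4:ℝ)^n := pow_nonneg (by norm_num) n
      nlinarith
  have ht2 : Tendsto (fun n : ℕ => (x - x^2) - (1/4:ℝ)^n * (It n x - (It n x)^2)) atTop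
      (𝓝 (x - x^2)) := by
    have h5 := Tendsto.sub (tendsto_const_nhds : Tendsto (fun _ : ℕ => x - x^2) atTop (𝓝 (x - x^2))) hz
    simpa using h5
  have ht2' : Tendsto (fun n => ∑ i ∈ Finset.range n, s i * W a i x) atTop (𝓝 (x - x^2)) :=
    ht2.congr (fun n => (heqn n).symm)
  exact tendsto_nhds_unique ht1 ht2'

/-- If the compositional-network output `x - ∑ s i * W i x` (with `s 0 = a 0 * a 1`
and coefficients obeying the differentiability recurrence) is twice continuously
differentiable, then all peak parameters equal `1/2` and the output is `x ^ 2`. -/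
theorem second_derivative_forces_square (a : ℕ → ℝ) (s : ℕ → ℝ) (c : ℝ)
    (hc : c ∈ Set.Ioo (0:ℝ) (1/2)) (ha : ∀ i, a i ∈ Set.Icc c (1 - c))
    (hs0 : s 0 = a 0 * a 1)
    (hrec : ∀ i, s (i + 1) = s i * (1 - a (i + 1)) * a (i + 2))
    (hsmooth : ContDiffOn ℝ 2
      (fun x => x - ∑' i : ℕ, s i * W a i x) (Set.Icc (0:ℝ) 1)) :
    (∀ i, a i = 1 / 2) ∧
    (∀ x ∈ Set.Icc (0:ℝ) 1, x - ∑' i : ℕ, s i * W a i x = x ^ 2) := by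
  have hhalf : ∀ i, a i = 1 / 2 := by
    intro i
    by_contra h
    exact bad_case hc ha hs0 hrec hsmooth i h
  refine ⟨hhalf, ?_⟩
  intro x hx
  have hs4 : ∀ i, s i = (1/4:ℝ)^(i+1) := by
    intro i
    induction i with
    | zero => rw [hs0, hhalf 0, hhalf 1]; norm_num
    | succ n ih => rw [hrec n, ih, hhalf (n+1), hhalf (n+2)]; ring
  rw [half_sum hhalf hs4 hx]
  ring
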